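/- Let n ≥ 1 and k ≥ 1 be integers. The greedy partition μ(n,k), defined by μ_1 = ⌈n/k⌉ and μ_i = ⌈(n − Σ_{j<i} μ_j)/k⌉ for i > 1 (stopping when the remainder n − Σ_{j≤i} μ_j reaches 0), is a partition of n that generates all k-partitions of n. -/

import Mathlib

/-- A partition of `n`: a multiset of positive integers summing to `n`. -/
def IsPartition (n : ℕ) (lam : Multiset ℕ) : Prop :=
  (∀ x ∈ lam, 0 < x) ∧ lam.sum = n

/-- `μ` generates `lam`: `μ` decomposes into disjoint sub-multisets, one summing
to each part of `lam`. -/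
def Generates (μ lam : Multiset ℕ) : Prop :=
  ∃ P : Multiset (Multiset ℕ), P.sum = μ ∧ P.map Multiset.sum = lam

/-- `μ` generates all partitions of `n` with at most `k` parts. -/
def GeneratesAll (n k : ℕ) (μ : Multiset ℕ) : Prop :=
  ∀ lam : Multiset ℕ, IsPartition n lam → Multiset.card lam ≤ k → Generates μ lam

/-- The greedy partition: repeatedly take `⌈remainder / k⌉`. -/
def greedyList (k : ℕ) : ℕ → List ℕ
  | 0 => []
  | (n + 1) =>
    if hk : k = 0 then []
    else (n + k) / k :: greedyList k (n + 1 - (n + k) / k)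
  termination_by n => n
  decreasing_by
    have h1 : 1 ≤ (n + k) / k :=
      (Nat.one_le_div_iff (Nat.pos_of_ne_zero hk)).mpr (Nat.le_add_left k n)
    omega

lemma exists_max_aux (s : Multiset ℕ) (hs : s ≠ 0) : ∃ M ∈ s, ∀ x ∈ s, x ≤ M := by
  induction s using Multiset.induction with
  | empty => simp at hs
  | cons a s ih =>
    rcases eq_or_ne s 0 with rfl | hs0
    · exact ⟨a, by simp, by simp⟩
    · obtain ⟨M, hM, hmax⟩ := ih hs0
      rcases le_total a M with h | h
      · refine ⟨M, Multiset.mem_cons_of_mem hM, ?_⟩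
        intro x hx
        rcases Multiset.mem_cons.1 hx with rfl | hx
        · exact h
        · exact hmax x hx
      · refine ⟨a, Multiset.mem_cons_self a s, ?_⟩
        intro x hx
        rcases Multiset.mem_cons.1 hx with rfl | hx
        · exact le_rfl
        · exact (hmax x hx).trans h

lemma greedy_key (k : ℕ) (hk : 1 ≤ k) : ∀ n : ℕ,
    (∀ x ∈ greedyList k n, 0 < x) ∧ (greedyList k n).sum = n ∧
      GeneratesAll n k (↑(greedyList k n) : Multiset ℕ) := by
  intro n
  induction n using Nat.strong_induction_on with
  | _ n ih =>
  rcases n with _ | m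
  · refine ⟨by simp [greedyList], by simp [greedyList], ?_⟩
    rintro lam ⟨hpos, hsum⟩ _
    have hlam : lam = 0 := by
      refine Multiset.eq_zero_of_forall_notMem fun x hx => ?_
      have h1 : 0 < x := hpos x hx
      have h2 : x ≤ lam.sum := Multiset.single_le_sum (fun y _ => Nat.zero_le y) x hx
      omega
    exact ⟨0, by simp [greedyList], by simp [hlam]⟩
  · have hk0 : k ≠ 0 := by omega
    set a := (m + k) / k with ha
    have hgreedy : greedyList k (m + 1) = a :: greedyList k (m + 1 - a) := by
      rw [greedyList]
      simp [hk0, ha]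
    have ha1 : 1 ≤ a :=
      (Nat.one_le_div_iff (by omega)).mpr (by omega)
    have ha2 : a ≤ m + 1 := by
      have hmk : m + k < (m + 2) * k := by nlinarith
      have := (Nat.div_lt_iff_lt_mul (show 0 < k by omega)).mpr hmk
      omega
    have hdivle : ∀ M : ℕ, m + 1 ≤ k * M → a ≤ M := by
      intro M hM
      have h4 : m + k < (M + 1) * k := by
        rw [add_mul, one_mul, Nat.mul_comm]; omega
      exact Nat.le_of_lt_succ ((Nat.div_lt_iff_lt_mul (show 0 < k by omega)).mpr h4)
    clear_value a
    clear ha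
    obtain ⟨ihpos, ihsum, ihgen⟩ := ih (m + 1 - a) (by omega)
    refine ⟨?_, ?_, ?_⟩
    · intro x hx
      rw [hgreedy] at hx
      rcases List.mem_cons.1 hx with rfl | hx
      · omega
      · exact ihpos x hx
    · rw [hgreedy, List.sum_cons, ihsum]; omega
    · rintro lam ⟨hpos, hsum⟩ hcard
      have hne : lam ≠ 0 := by
        intro h; rw [h] at hsum; simp at hsum
      obtain ⟨M, hM, hmax⟩ := exists_max_aux lam hne
      have hMa : a ≤ M := by
        have h1 : lam.sum ≤ Multiset.card lam • M :=
          Multiset.sum_le_card_nsmul lam M hmax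
        rw [smul_eq_mul] at h1
        have h2 : Multiset.card lam * M ≤ k * M :=
          Nat.mul_le_mul_right M hcard
        exact hdivle M (by omega)
      have hsplit : lam.sum = M + (lam.erase M).sum := by
        rw [← Multiset.sum_cons, Multiset.cons_erase hM]
      rcases eq_or_lt_of_le hMa with heq | hlt
      · -- M = a
        have hpart' : IsPartition (m + 1 - a) (lam.erase M) := by
          constructor
          · exact fun x hx => hpos x (Multiset.mem_of_mem_erase hx)
          · omega
        obtain ⟨P', hP'sum, hP'map⟩ :=
          ihgen (lam.erase M) hpart' ((Multiset.card_erase_le).trans hcard)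
        refine ⟨({a} : Multiset ℕ) ::ₘ P', ?_, ?_⟩
        · rw [hgreedy, ← Multiset.cons_coe, Multiset.sum_cons, hP'sum,
            Multiset.singleton_add]
        · rw [Multiset.map_cons, Multiset.sum_singleton, hP'map, heq,
            Multiset.cons_erase hM]
      · -- a < M
        have hpart' : IsPartition (m + 1 - a) ((M - a) ::ₘ lam.erase M) := by
          constructor
          · intro x hx
            rcases Multiset.mem_cons.1 hx with rfl | hx
            · omega
            · exact hpos x (Multiset.mem_of_mem_erase hx)
          · rw [Multiset.sum_cons]; omega
        have hcard' : Multiset.card ((M - a) ::ₘ lam.erase M) ≤ k := by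
          rw [Multiset.card_cons, Multiset.card_erase_of_mem hM, Nat.pred_eq_sub_one]
          have : 1 ≤ Multiset.card lam := Multiset.card_pos.mpr hne
          omega
        obtain ⟨P', hP'sum, hP'map⟩ := ihgen _ hpart' hcard'
        have hmem : M - a ∈ P'.map Multiset.sum := by
          rw [hP'map]; exact Multiset.mem_cons_self _ _
        obtain ⟨S, hS, hSsum⟩ := Multiset.mem_map.1 hmem
        have hP'' : P' = S ::ₘ P'.erase S := (Multiset.cons_erase hS).symm
        refine ⟨(a ::ₘ S) ::ₘ P'.erase S, ?_, ?_⟩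
        · rw [Multiset.sum_cons, Multiset.cons_add]
          rw [hP''] at hP'sum
          rw [Multiset.sum_cons] at hP'sum
          rw [hP'sum, hgreedy, ← Multiset.cons_coe]
        · rw [hP''] at hP'map
          rw [Multiset.map_cons, hSsum] at hP'map
          have hrest : (P'.erase S).map Multiset.sum = lam.erase M :=
            (Multiset.cons_inj_right _).1 hP'map
          rw [Multiset.map_cons, Multiset.sum_cons, hSsum, hrest]
          have : a + (M - a) = M := by omega
          rw [this, Multiset.cons_erase hM]

/-- the greedy partition `μ(n,k)` is a partition of `n` and
generates all `k`-partitions of `n`. -/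
theorem greedy_isPartition_and_generatesAll (n k : ℕ) (hn : 1 ≤ n) (hk : 1 ≤ k) :
    IsPartition n (↑(greedyList k n) : Multiset ℕ) ∧
      GeneratesAll n k (↑(greedyList k n) : Multiset ℕ) := by
  obtain ⟨h1, h2, h3⟩ := greedy_key k hk n
  exact ⟨⟨by simpa using h1, by simpa using h2⟩, h3⟩
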